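/- Let (X,d) be a metric space, A, B ⊆ X with B approximately compact with respect to A, T : A → B, and (u_n) a sequence in A with u_n → u ∈ A and d(u_{n+1}, T u_n) = d(A,B) for all n. Then there is a subsequence (T u_{n_k}) converging to some v ∈ B with d(u, v) = d(A,B); in particular u ∈ A₀. -/

import Mathlib

open Filter Topology Set

variable {X : Type*} [MetricSpace X]

/-- Distance between two sets. -/
noncomputable def setDist (A B : Set X) : ℝ :=
  sInf (Set.image2 dist A B)

/-- `A₀ = { a ∈ A : ∃ b ∈ B, d(a,b) = d(A,B) }`. -/
def proxA (A B : Set X) : Set X := {a ∈ A | ∃ b ∈ B, dist a b = setDist A B}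

/-- `B₀ = { b ∈ B : ∃ a ∈ A, d(a,b) = d(A,B) }`. -/
def proxB (A B : Set X) : Set X := {b ∈ B | ∃ a ∈ A, dist a b = setDist A B}

/-- `B` is approximately compact with respect to `A` (limits of the
subsequences lie in `B`). -/
def ApproxCompactWRT (B A : Set X) : Prop :=
  ∀ y ∈ A, ∀ x : ℕ → X, (∀ n, x n ∈ B) →
    Tendsto (fun n => dist y (x n)) atTop (𝓝 (Metric.infDist y B)) →
    ∃ z ∈ B, ∃ k : ℕ → ℕ, StrictMono k ∧ Tendsto (x ∘ k) atTop (𝓝 z)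

theorem limit_in_proxA (A B : Set X) (hA : A.Nonempty) (hB : B.Nonempty)
    (hAC : ApproxCompactWRT B A)
    (T : X → X) (hT : ∀ x ∈ A, T x ∈ B)
    (u : ℕ → X) (huA : ∀ n, u n ∈ A) (p : X) (hp : p ∈ A)
    (hlim : Tendsto u atTop (𝓝 p))
    (hrec : ∀ n, dist (u (n + 1)) (T (u n)) = setDist A B) :
    (∃ v ∈ B, ∃ k : ℕ → ℕ, StrictMono k ∧
      Tendsto (fun i => T (u (k i))) atTop (𝓝 v) ∧ dist p v = setDist A B) ∧
    p ∈ proxA A B := by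
  -- basic facts about setDist
  have hbdd : BddBelow (Set.image2 dist A B) := ⟨0, by rintro _ ⟨a, _, b, _, rfl⟩; positivity⟩
  have hle : ∀ b ∈ B, setDist A B ≤ dist p b := fun b hb =>
    csInf_le hbdd ⟨p, hp, b, hb, rfl⟩
  have h2 : setDist A B ≤ Metric.infDist p B := by
    refine le_of_not_gt fun h => ?_
    obtain ⟨y, hy, hlt⟩ := (Metric.infDist_lt_iff hB).1 h
    exact absurd (hle y hy) (not_le.2 hlt)
  have h3 : ∀ n, Metric.infDist p B ≤ dist p (T (u n)) := fun n =>
    Metric.infDist_le_dist_of_mem (hT _ (huA n))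
  have h4 : ∀ n, dist p (T (u n)) ≤ dist p (u (n + 1)) + setDist A B := fun n => by
    calc dist p (T (u n)) ≤ dist p (u (n + 1)) + dist (u (n + 1)) (T (u n)) :=
          dist_triangle _ _ _
      _ = dist p (u (n + 1)) + setDist A B := by rw [hrec n]
  -- the upper bound tends to setDist A B
  have hup : Tendsto (fun n => dist p (u (n + 1)) + setDist A B) atTop
      (𝓝 (setDist A B)) := by
    have h0 : Tendsto (fun n => dist p (u (n + 1))) atTop (𝓝 0) := by
      have h' : Tendsto (fun n => dist p (u n)) atTop (𝓝 (dist p p)) :=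
        (Continuous.tendsto (continuous_const.dist continuous_id) p).comp hlim
      simpa [dist_self, Function.comp_def] using h'.comp (tendsto_add_atTop_nat 1)
    simpa using h0.add tendsto_const_nhds
  have heq : Metric.infDist p B = setDist A B := by
    refine le_antisymm ?_ h2
    exact le_of_tendsto_of_tendsto' tendsto_const_nhds hup fun n => (h3 n).trans (h4 n)
  have htend : Tendsto (fun n => dist p (T (u n))) atTop (𝓝 (Metric.infDist p B)) := by
    rw [heq]
    exact tendsto_of_tendsto_of_tendsto_of_le_of_le
      (tendsto_const_nhds.congr fun n => (heq.symm ▸ rfl : setDist A B = setDist A B))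
      hup (fun n => heq ▸ h3 n) h4
  obtain ⟨z, hz, k, hk, hzk⟩ := hAC p hp (fun n => T (u n)) (fun n => hT _ (huA n)) htend
  have hdz : dist p z = setDist A B := by
    have h1 : Tendsto (fun i => dist p (T (u (k i)))) atTop (𝓝 (dist p z)) :=
      ((Continuous.tendsto (continuous_const.dist continuous_id) z).comp hzk)
    have h2' : Tendsto (fun i => dist p (T (u (k i)))) atTop (𝓝 (Metric.infDist p B)) :=
      htend.comp hk.tendsto_atTop
    rw [← heq]
    exact tendsto_nhds_unique h1 h2'
  exact ⟨⟨z, hz, k, hk, hzk, hdz⟩, hp, z, hz, hdz⟩
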